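/- In any election, there exists a distribution Δ over committees of size at most k such that for every candidate a, the expected (over S ~ Δ) fraction of voters preferring a over S is strictly less than 1/(k+1). -/

import Mathlib

set_option maxHeartbeats 1000000

open Finset

lemma exists_row_strategy {C : Type*} [Fintype C] [Nonempty C] [DecidableEq C] (k : ℕ)
    (f : Finset C → C → ℝ) (vstar : ℝ)
    (hA : ∀ p : C → ℝ, (∀ a, 0 ≤ p a) → (∑ a, p a) = 1 →
      ∃ S : Finset C, S.card ≤ k ∧ (∑ a, p a * f S a) ≤ vstar) :
    ∃ Δ : Finset C → ℝ, (∀ S, 0 ≤ Δ S) ∧ (∀ S, Δ S ≠ 0 → S.card ≤ k) ∧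
      (∑ S : Finset C, Δ S) = 1 ∧ ∀ a, (∑ S : Finset C, Δ S * f S a) ≤ vstar := by
  by_contra hcon
  set ι := {S : Finset C // S.card ≤ k} with hι
  have i₀ : ι := ⟨∅, by simp⟩
  set r : ι → (C → ℝ) := fun i a => f i.1 a with hr
  set Φ : (ι → ℝ) →ₗ[ℝ] (C → ℝ) :=
    { toFun := fun w => ∑ i : ι, w i • r i
      map_add' := by
        intro w w'; simp [add_smul, Finset.sum_add_distrib]
      map_smul' := by
        intro c w
        simp only [RingHom.id_apply, Finset.smul_sum, smul_smul]
        exact Finset.sum_congr rfl fun i _ => by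
          rw [Pi.smul_apply, smul_eq_mul] } with hΦ
  have hΦapply : ∀ (w : ι → ℝ) (a : C), Φ w a = ∑ i : ι, w i * f i.1 a := by
    intro w a
    show (∑ i : ι, w i • r i) a = _
    rw [Finset.sum_apply]
    simp [r]
  set K : Set (C → ℝ) := Φ '' stdSimplex ℝ ι with hK
  set N : Set (C → ℝ) := {x | ∀ a, x a ≤ vstar} with hN
  -- K and N are disjoint
  have hdisj : Disjoint K N := by
    rw [Set.disjoint_left]
    rintro x ⟨w, hw, rfl⟩ hxN
    apply hcon
    refine ⟨fun S => ∑ i : ι, if i.1 = S then w i else 0, ?_, ?_, ?_, ?_⟩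
    · intro S
      exact Finset.sum_nonneg fun i _ => by
        split
        · exact hw.1 i
        · exact le_refl 0
    · intro S hS
      by_contra hSk
      apply hS
      apply Finset.sum_eq_zero
      intro i _
      have : i.1 ≠ S := fun h => hSk (h ▸ i.2)
      simp [this]
    · rw [Finset.sum_comm]
      have : ∀ i : ι, (∑ S : Finset C, if i.1 = S then w i else 0) = w i := by
        intro i; simp
      rw [Finset.sum_congr rfl fun i _ => this i]
      exact hw.2
    · intro a
      have key : (∑ S : Finset C, (∑ i : ι, if i.1 = S then w i else 0) * f S a)
          = ∑ i : ι, w i * f i.1 a := by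
        have : ∀ S : Finset C, (∑ i : ι, if i.1 = S then w i else 0) * f S a
            = ∑ i : ι, if i.1 = S then w i * f S a else 0 := by
          intro S
          rw [Finset.sum_mul]
          exact Finset.sum_congr rfl fun i _ => by split <;> simp_all
        rw [Finset.sum_congr rfl fun S _ => this S, Finset.sum_comm]
        apply Finset.sum_congr rfl
        intro i _
        simp
      rw [key, ← hΦapply]
      exact hxN a
  -- separation
  obtain ⟨φ, u, v, hKu, huv, hNv⟩ :=
    geometric_hahn_banach_compact_closed
      (hK ▸ (convex_stdSimplex ℝ ι).linear_image Φ)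
      (hK ▸ (isCompact_stdSimplex ℝ ι).image Φ.continuous_on_pi)
      (by
        have : N = ⋂ a : C, {x : C → ℝ | x a ≤ vstar} := by
          ext x; simp [hN, Set.mem_iInter]
        rw [this]
        exact convex_iInter fun a => convex_halfSpace_le
          (IsLinearMap.mk (fun x y => rfl) (fun c x => rfl)) _)
      (by
        have : N = ⋂ a : C, {x : C → ℝ | x a ≤ vstar} := by
          ext x; simp [hN, Set.mem_iInter]
        rw [this]
        exact isClosed_iInter fun a => isClosed_le (continuous_apply a) continuous_const)
      hdisj
  -- coefficients
  set e : C → (C → ℝ) := fun a j => if a = j then 1 else 0 with he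
  set c : C → ℝ := fun a => φ (e a) with hc
  have hrep : ∀ x : C → ℝ, φ x = ∑ a : C, x a * c a := by
    intro x
    conv_lhs => rw [pi_eq_sum_univ x]
    rw [map_sum]
    exact Finset.sum_congr rfl fun a _ => by rw [map_smul]; simp [hc, he, smul_eq_mul]
  -- constant vstar vector is in N
  have hconstN : (fun _ : C => vstar) ∈ N := fun a => le_refl _
  have hφconst : v < φ (fun _ => vstar) := hNv _ hconstN
  -- c a ≤ 0
  have hcle : ∀ a, c a ≤ 0 := by
    intro a
    by_contra hca
    push_neg at hca
    set t : ℝ := (φ (fun _ => vstar) - v + 1) / c a with ht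
    have htpos : 0 < t := div_pos (by linarith) hca
    have hmem : ((fun _ : C => vstar) - t • e a) ∈ N := by
      intro b
      simp only [Pi.sub_apply, Pi.smul_apply, smul_eq_mul, he]
      split <;> nlinarith
    have := hNv _ hmem
    rw [map_sub, map_smul] at this
    have : φ (fun _ => vstar) - t * c a > v := by simpa [hc, smul_eq_mul] using this
    have : t * c a = φ (fun _ => vstar) - v + 1 := by
      rw [ht, div_mul_cancel₀ _ hca.ne']
    linarith
  -- some c a < 0
  have hx₀ : Φ (fun i => if i = i₀ then 1 else 0) ∈ K := by
    refine ⟨_, ⟨fun i => by split <;> norm_num, by simp⟩, rfl⟩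
  have hΦx₀ : φ (Φ fun i => if i = i₀ then 1 else 0) < u := hKu _ hx₀
  have hsome : ∃ a, c a < 0 := by
    by_contra hall
    push_neg at hall
    have hc0 : ∀ a, c a = 0 := fun a => le_antisymm (hcle a) (hall a)
    have hz : ∀ x : C → ℝ, φ x = 0 := by
      intro x; rw [hrep]; simp [hc0]
    rw [hz] at hΦx₀ hφconst
    linarith
  obtain ⟨a₀, ha₀⟩ := hsome
  have hT : 0 < ∑ a : C, (- c a) :=
    Finset.sum_pos' (fun a _ => neg_nonneg.2 (hcle a))
      ⟨a₀, Finset.mem_univ a₀, by linarith⟩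
  set T : ℝ := ∑ a : C, (- c a) with hTdef
  set p : C → ℝ := fun a => (- c a) / T with hp
  have hpnn : ∀ a, 0 ≤ p a := fun a => div_nonneg (neg_nonneg.2 (hcle a)) hT.le
  have hpsum : (∑ a, p a) = 1 := by
    rw [hp, ← Finset.sum_div, ← hTdef, div_self hT.ne']
  obtain ⟨S₀, hS₀k, hS₀⟩ := hA p hpnn hpsum
  -- evaluate φ at the row S₀
  set w₁ : ι → ℝ := fun i => if i = (⟨S₀, hS₀k⟩ : ι) then 1 else 0 with hw₁
  have hx₁K : Φ w₁ ∈ K :=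
    ⟨w₁, ⟨fun i => by simp only [hw₁]; split <;> norm_num, by simp [hw₁]⟩, rfl⟩
  have hx₁lt : φ (Φ w₁) < u := hKu _ hx₁K
  have hx₁a : ∀ a, Φ w₁ a = f S₀ a := by
    intro a
    rw [hΦapply]
    simp [hw₁]
  have hφx₁ : φ (Φ w₁) = ∑ a : C, f S₀ a * c a := by
    rw [hrep]
    exact Finset.sum_congr rfl fun a _ => by rw [hx₁a]
  have hca_eq : ∀ a, c a = -(T * p a) := by
    intro a
    rw [hp]
    field_simp
  have hφx₁' : φ (Φ w₁) = -(T * ∑ a : C, p a * f S₀ a) := by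
    rw [hφx₁, Finset.mul_sum, ← Finset.sum_neg_distrib]
    exact Finset.sum_congr rfl fun a _ => by rw [hca_eq a]; ring
  have hφconst' : φ (fun _ => vstar) = -(T * vstar) := by
    rw [hrep]
    have : ∑ a : C, vstar * c a = vstar * ∑ a : C, c a := by rw [Finset.mul_sum]
    rw [this]
    have : (∑ a : C, c a) = -T := by
      rw [hTdef, ← Finset.sum_neg_distrib]
      simp
    rw [this]; ring
  nlinarith [hS₀, hT, hx₁lt, huv, hφconst, hφx₁', hφconst']

lemma best_response {V C : Type*} [Fintype V] [Fintype C] [Nonempty V] [Nonempty C]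
    [DecidableEq C] (pref : V → C → C → Prop) [∀ v, DecidableRel (pref v)]
    (hlin : ∀ v, IsStrictTotalOrder C (pref v)) (k : ℕ) (hk : 1 ≤ k)
    (p : C → ℝ) (hp0 : ∀ a, 0 ≤ p a) (hp1 : (∑ a, p a) = 1) :
    ∃ S : Finset C, S.card ≤ k ∧
      (∑ a, p a * (((Finset.univ.filter fun v => ∀ b ∈ S, pref v a b).card : ℝ) /
        (Fintype.card V : ℝ)))
      ≤ (1 - ((Fintype.card C : ℝ))⁻¹ ^ (k + 1)) / ((k : ℝ) + 1) := by
  classical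
  set n : ℝ := (Fintype.card V : ℝ) with hn
  have hnpos : 0 < n := by
    rw [hn]; exact_mod_cast Fintype.card_pos
  set m : ℝ := (Fintype.card C : ℝ) with hm
  have hmpos : 0 < m := by
    rw [hm]; exact_mod_cast Fintype.card_pos
  set δ : ℝ := m⁻¹ ^ (k + 1) with hδ
  set vstar : ℝ := (1 - δ) / ((k : ℝ) + 1) with hvstar
  set f : Finset C → C → ℝ := fun S a =>
    ((Finset.univ.filter fun v => ∀ b ∈ S, pref v a b).card : ℝ) / n with hf
  set g : (Fin k → C) → ℝ := fun t => ∑ a, p a * f (Finset.image t Finset.univ) a with hg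
  set W : (Fin k → C) → ℝ := fun t => ∏ i, p (t i) with hW
  have hWnn : ∀ t, 0 ≤ W t := fun t => Finset.prod_nonneg fun i _ => hp0 (t i)
  -- total weight is 1
  have hWsum : (∑ t : Fin k → C, W t) = 1 := by
    rw [hW]
    rw [← Fintype.piFinset_univ, ← Finset.prod_univ_sum (fun _ => Finset.univ) (fun _ c => p c)]
    simp [hp1]
  -- weights on Fin (k+1) tuples
  set wgt : (Fin (k + 1) → C) → ℝ := fun u => ∏ j, p (u j) with hwgt
  have hwgtnn : ∀ u, 0 ≤ wgt u := fun u => Finset.prod_nonneg fun j _ => hp0 (u j)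
  have hwgtsum : (∑ u : Fin (k + 1) → C, wgt u) = 1 := by
    rw [hwgt, ← Fintype.piFinset_univ,
      ← Finset.prod_univ_sum (fun _ => Finset.univ) (fun _ c => p c)]
    simp [hp1]
  set χ : V → Fin (k + 1) → (Fin (k + 1) → C) → ℝ := fun v i u =>
    if ∀ j, j ≠ i → pref v (u i) (u j) then 1 else 0 with hχ
  set T : V → Fin (k + 1) → ℝ := fun v i => ∑ u : Fin (k + 1) → C, wgt u * χ v i u with hT
  -- symmetry
  have hsym : ∀ v i, T v i = T v 0 := by
    intro v i
    rw [hT]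
    dsimp only
    set σ : Fin (k+1) ≃ Fin (k+1) := Equiv.swap 0 i with hσ
    refine Fintype.sum_equiv (Equiv.arrowCongr σ (Equiv.refl C)).symm _ _ ?_
    intro u
    -- (arrowCongr σ (refl)).symm u = u ∘ σ
    have harr : ∀ j, ((Equiv.arrowCongr σ (Equiv.refl C)).symm u) j = u (σ j) := by
      intro j; simp [Equiv.arrowCongr, hσ]
    have hw : wgt ((Equiv.arrowCongr σ (Equiv.refl C)).symm u) = wgt u := by
      rw [hwgt]
      dsimp only
      rw [Finset.prod_congr rfl fun j _ => by rw [harr j]]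
      exact Equiv.prod_comp σ (fun j => p (u j))
    rw [hw]
    congr 1
    rw [hχ]
    dsimp only
    have hcond : (∀ j, j ≠ i → pref v (u i) (u j)) ↔
        (∀ j, j ≠ 0 → pref v (((Equiv.arrowCongr σ (Equiv.refl C)).symm u) 0)
          (((Equiv.arrowCongr σ (Equiv.refl C)).symm u) j)) := by
      rw [show (((Equiv.arrowCongr σ (Equiv.refl C)).symm u) 0) = u i by
        rw [harr]; simp [hσ]]
      constructor
      · intro H j hj
        rw [harr]
        refine H (σ j) fun hσj => hj ?_
        have h2 : σ j = σ 0 := by rw [hσj]; simp [hσ]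
        exact σ.injective h2
      · intro H j hj
        have hσj0 : σ j ≠ 0 := by
          intro hσj
          apply hj
          have h2 : σ j = σ i := by rw [hσj]; simp [hσ]
          exact σ.injective h2
        have h1 := H (σ j) hσj0
        rw [harr] at h1
        simpa [hσ, Equiv.swap_apply_self] using h1
    by_cases hC : ∀ j, j ≠ i → pref v (u i) (u j)
    · rw [if_pos hC, if_pos (hcond.mp hC)]
    · rw [if_neg hC, if_neg (fun h => hC (hcond.mpr h))]
  -- pointwise bound: at most one strict winner, none if tuple is constant
  have hpoint : ∀ (v : V) (u : Fin (k + 1) → C),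
      (∑ i, χ v i u) + (if ∀ j, u j = u 0 then (1 : ℝ) else 0) ≤ 1 := by
    intro v u
    by_cases hcst : ∀ j, u j = u 0
    · have hzero : ∀ i, χ v i u = 0 := by
        intro i
        rw [hχ]
        dsimp only
        rw [if_neg]
        intro H
        have hj : ∃ j : Fin (k + 1), j ≠ i := by
          rcases Nat.exists_eq_add_of_le hk with ⟨k', rfl⟩
          by_cases hi0 : i = ⟨0, by omega⟩
          · exact ⟨⟨1, by omega⟩, by rw [hi0]; intro h; simpa using congrArg Fin.val h⟩
          · exact ⟨⟨0, by omega⟩, fun h => hi0 h.symm⟩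
        obtain ⟨j, hji⟩ := hj
        have h1 := H j hji
        rw [hcst j, hcst i] at h1
        exact (hlin v).irrefl _ h1
      rw [Finset.sum_congr rfl fun i _ => hzero i]
      simp [hcst]
    · rw [if_neg hcst, add_zero, hχ]
      dsimp only
      rw [Finset.sum_boole]
      have hcard : (Finset.univ.filter fun i =>
          ∀ j, j ≠ i → pref v (u i) (u j)).card ≤ 1 := by
        rw [Finset.card_le_one]
        intro i hi i' hi'
        by_contra hne
        rw [Finset.mem_filter] at hi hi'
        have h1 := hi.2 i' (fun h => hne h.symm)
        have h2 := hi'.2 i hne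
        exact (hlin v).irrefl _ ((hlin v).trans _ _ _ h1 h2)
      exact_mod_cast hcard
  -- weight of constant tuples
  have hconstsum : (∑ u : Fin (k + 1) → C,
      wgt u * (if ∀ j, u j = u 0 then (1 : ℝ) else 0)) = ∑ c : C, p c ^ (k + 1) := by
    have h1 : (∑ u : Fin (k + 1) → C, wgt u * (if ∀ j, u j = u 0 then (1 : ℝ) else 0))
        = ∑ u ∈ Finset.univ.filter (fun u : Fin (k + 1) → C => ∀ j, u j = u 0), wgt u := by
      rw [Finset.sum_filter]
      exact Finset.sum_congr rfl fun u _ => by split <;> simp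
    have h2 : Finset.univ.filter (fun u : Fin (k + 1) → C => ∀ j, u j = u 0)
        = Finset.univ.image (fun c : C => (fun _ : Fin (k + 1) => c)) := by
      ext u
      simp only [Finset.mem_filter, Finset.mem_univ, true_and, Finset.mem_image]
      constructor
      · intro h
        exact ⟨u 0, (funext fun j => (h j).symm)⟩
      · rintro ⟨c, rfl⟩
        intro j; rfl
    rw [h1, h2, Finset.sum_image]
    · apply Finset.sum_congr rfl
      intro c _
      rw [hwgt]
      simp
    · intro c₁ _ c₂ _ h
      exact congrFun h 0
  -- some candidate has probability at least 1/m
  have hpmax : ∃ c : C, m⁻¹ ≤ p c := by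
    have h1 : (∑ _c : C, m⁻¹) ≤ ∑ c : C, p c := by
      rw [Finset.sum_const, hp1, Finset.card_univ, nsmul_eq_mul, ← hm,
        mul_inv_cancel₀ hmpos.ne']
    obtain ⟨c, _, hc⟩ := Finset.exists_le_of_sum_le Finset.univ_nonempty h1
    exact ⟨c, hc⟩
  have hδle : δ ≤ ∑ c : C, p c ^ (k + 1) := by
    obtain ⟨c₀, hc₀⟩ := hpmax
    calc δ = m⁻¹ ^ (k + 1) := hδ
      _ ≤ p c₀ ^ (k + 1) := pow_le_pow_left₀ (inv_nonneg.2 hmpos.le) hc₀ _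
      _ ≤ ∑ c : C, p c ^ (k + 1) :=
          Finset.single_le_sum (fun c _ => pow_nonneg (hp0 c) _) (Finset.mem_univ c₀)
  -- bound on T v 0
  have hTbound : ∀ v, T v 0 ≤ vstar := by
    intro v
    have hksum : ((k : ℝ) + 1) * T v 0 = ∑ i : Fin (k + 1), T v i := by
      rw [Finset.sum_congr rfl fun i _ => hsym v i]
      rw [Finset.sum_const, Finset.card_univ, Fintype.card_fin, nsmul_eq_mul]
      push_cast
      ring
    have hswap : (∑ i : Fin (k + 1), T v i)
        = ∑ u : Fin (k + 1) → C, wgt u * ∑ i, χ v i u := by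
      rw [hT]
      dsimp only
      rw [Finset.sum_comm]
      exact Finset.sum_congr rfl fun u _ => by rw [Finset.mul_sum]
    have hle : (∑ u : Fin (k + 1) → C, wgt u * ∑ i, χ v i u)
        ≤ ∑ u : Fin (k + 1) → C, wgt u * (1 - (if ∀ j, u j = u 0 then (1 : ℝ) else 0)) := by
      apply Finset.sum_le_sum
      intro u _
      exact mul_le_mul_of_nonneg_left (by linarith [hpoint v u]) (hwgtnn u)
    have heval : (∑ u : Fin (k + 1) → C, wgt u * (1 - (if ∀ j, u j = u 0 then (1 : ℝ) else 0)))
        = 1 - ∑ c : C, p c ^ (k + 1) := by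
      rw [Finset.sum_congr rfl fun u _ => mul_sub (wgt u) 1 _, Finset.sum_sub_distrib]
      rw [hconstsum]
      simp only [mul_one, hwgtsum]
    have hfinal : ((k : ℝ) + 1) * T v 0 ≤ 1 - δ := by
      rw [hksum]
      calc (∑ i : Fin (k + 1), T v i) = _ := hswap
        _ ≤ _ := hle
        _ = 1 - ∑ c : C, p c ^ (k + 1) := heval
        _ ≤ 1 - δ := by linarith
    rw [hvstar, le_div_iff₀ (by positivity : (0:ℝ) < (k:ℝ) + 1)]
    linarith
  -- indicator over tuples
  set χ₀ : V → C → (Fin k → C) → ℝ := fun v a t =>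
    if ∀ j, pref v a (t j) then 1 else 0 with hχ₀
  have hf_eq : ∀ (t : Fin k → C) (a : C), f (Finset.image t Finset.univ) a
      = n⁻¹ * ∑ v : V, χ₀ v a t := by
    intro t a
    rw [hf]
    dsimp only
    rw [div_eq_inv_mul]
    congr 1
    rw [← Finset.sum_boole]
    apply Finset.sum_congr rfl
    intro v _
    congr 1
    simp only [eq_iff_iff]
    constructor
    · intro h j
      exact h (t j) (Finset.mem_image_of_mem t (Finset.mem_univ j))
    · intro h b hb
      obtain ⟨j, _, rfl⟩ := Finset.mem_image.mp hb
      exact h j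
  have hTalt : ∀ v, T v 0 = ∑ a : C, ∑ t : Fin k → C, p a * W t * χ₀ v a t := by
    intro v
    rw [hT]
    dsimp only
    rw [← Equiv.sum_comp (Fin.consEquiv fun _ : Fin (k + 1) => C), Fintype.sum_prod_type]
    apply Finset.sum_congr rfl
    intro a _
    apply Finset.sum_congr rfl
    intro t _
    have hwgtcons : wgt ((Fin.consEquiv fun _ : Fin (k + 1) => C) (a, t)) = p a * W t := by
      rw [hwgt, hW]
      dsimp only
      rw [Fin.prod_univ_succ]
      simp [Fin.consEquiv_apply]
    have hχcons : χ v 0 ((Fin.consEquiv fun _ : Fin (k + 1) => C) (a, t)) = χ₀ v a t := by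
      rw [hχ, hχ₀]
      simp only [Fin.consEquiv_apply]
      congr 1
      simp only [eq_iff_iff]
      constructor
      · intro H j
        have h1 := H j.succ (Fin.succ_ne_zero j)
        rwa [Fin.cons_zero, Fin.cons_succ] at h1
      · intro H j hj
        obtain ⟨j', rfl⟩ := Fin.exists_succ_eq.mpr hj
        rw [Fin.cons_zero, Fin.cons_succ]
        exact H j'
    rw [hwgtcons, hχcons]
  -- the main averaging identity
  have hmain : (∑ t : Fin k → C, W t * g t) = n⁻¹ * ∑ v : V, T v 0 := by
    have h1 : ∀ t : Fin k → C, W t * g t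
        = n⁻¹ * ∑ v : V, ∑ a : C, p a * W t * χ₀ v a t := by
      intro t
      rw [hg]
      dsimp only
      rw [Finset.sum_congr rfl fun a _ => by rw [hf_eq t a]]
      simp only [Finset.mul_sum]
      rw [Finset.sum_comm]
      refine Finset.sum_congr rfl fun v _ => Finset.sum_congr rfl fun a _ => by ring
    rw [Finset.sum_congr rfl fun t _ => h1 t, ← Finset.mul_sum]
    congr 1
    rw [Finset.sum_comm]
    apply Finset.sum_congr rfl
    intro v _
    rw [hTalt v, Finset.sum_comm]
  -- conclude: average ≤ vstar
  have havg : (∑ t : Fin k → C, W t * g t) ≤ vstar := by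
    rw [hmain]
    have h1 : (∑ v : V, T v 0) ≤ (Fintype.card V) • vstar :=
      Finset.card_univ (α := V) ▸ Finset.sum_le_card_nsmul Finset.univ _ vstar
        (fun v _ => hTbound v)
    rw [inv_mul_eq_div, div_le_iff₀ hnpos]
    rw [nsmul_eq_mul] at h1
    calc (∑ v : V, T v 0) ≤ (Fintype.card V : ℝ) * vstar := h1
      _ = vstar * n := by rw [hn]; ring
  -- extract a good committee
  have hex : ∃ t : Fin k → C, g t ≤ vstar := by
    by_contra hno
    push_neg at hno
    have h1 : ∀ t, 0 ≤ W t * (g t - vstar) :=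
      fun t => mul_nonneg (hWnn t) (by linarith [hno t])
    have h2 : (∑ t : Fin k → C, W t * (g t - vstar)) = (∑ t : Fin k → C, W t * g t) - vstar := by
      rw [Finset.sum_congr rfl fun t _ => mul_sub (W t) (g t) vstar, Finset.sum_sub_distrib,
        ← Finset.sum_mul, hWsum, one_mul]
    have h3 : (∑ t : Fin k → C, W t * (g t - vstar)) = 0 :=
      le_antisymm (by rw [h2]; linarith) (Finset.sum_nonneg fun t _ => h1 t)
    have h4 := (Finset.sum_eq_zero_iff_of_nonneg (fun t _ => h1 t)).mp h3
    have h5 : ∀ t, W t = 0 := by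
      intro t
      have h6 := h4 t (Finset.mem_univ t)
      rcases mul_eq_zero.mp h6 with h | h
      · exact h
      · exfalso; have := hno t; linarith
    rw [Finset.sum_congr rfl fun t _ => h5 t] at hWsum
    simp at hWsum
  obtain ⟨t, ht⟩ := hex
  refine ⟨Finset.image t Finset.univ, ?_, ht⟩
  calc (Finset.image t Finset.univ).card ≤ (Finset.univ : Finset (Fin k)).card :=
      Finset.card_image_le
    _ = k := by simp


/-- In any election there exists a probability distribution `Δ` over committees of size at
most `k` such that for every candidate `a`, the expected (over `S ~ Δ`) fraction of voters
preferring `a` over every member of `S` is strictly less than `1/(k+1)`. -/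
theorem stmt17 (V C : Type*) [Fintype V] [Fintype C] [Nonempty V] [DecidableEq C]
    (pref : V → C → C → Prop) [∀ v, DecidableRel (pref v)]
    (hlin : ∀ v, IsStrictTotalOrder C (pref v)) (k : ℕ) (hk : 1 ≤ k) :
    ∃ Δ : Finset C → ℝ, (∀ S, 0 ≤ Δ S) ∧ (∀ S, Δ S ≠ 0 → S.card ≤ k) ∧
      (∑ S : Finset C, Δ S) = 1 ∧
      ∀ a : C,
        (∑ S : Finset C, Δ S *
            (((Finset.univ.filter fun v => ∀ b ∈ S, pref v a b).card : ℝ) /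
              (Fintype.card V : ℝ))) < 1 / ((k : ℝ) + 1) := by
  classical
  cases isEmpty_or_nonempty C with
  | inl hempty =>
      refine ⟨fun S => if S = (∅ : Finset C) then 1 else 0, ?_, ?_, ?_, ?_⟩
      · intro S
        by_cases h : S = (∅ : Finset C) <;> simp [h]
      · intro S hS
        have : S = ∅ := by
          by_contra h
          exact hS (if_neg h)
        rw [this]
        simp
      · rw [Finset.sum_ite_eq' Finset.univ (∅ : Finset C) (fun _ => (1:ℝ))]
        simp only [Finset.mem_univ, if_true]
      · intro a
        exact isEmptyElim a
  | inr hne =>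
      have hδpos : (0 : ℝ) < ((Fintype.card C : ℝ))⁻¹ ^ (k + 1) := by
        have : (0 : ℝ) < (Fintype.card C : ℝ) := by exact_mod_cast Fintype.card_pos
        positivity
      obtain ⟨Δ, h1, h2, h3, h4⟩ :=
        exists_row_strategy k
          (fun S a => (((Finset.univ.filter fun v => ∀ b ∈ S, pref v a b).card : ℝ) /
            (Fintype.card V : ℝ)))
          ((1 - ((Fintype.card C : ℝ))⁻¹ ^ (k + 1)) / ((k : ℝ) + 1))
          (fun p hp0 hp1 => best_response pref hlin k hk p hp0 hp1)
      refine ⟨Δ, h1, h2, h3, fun a => lt_of_le_of_lt (h4 a) ?_⟩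
      have hkpos : (0 : ℝ) < (k : ℝ) + 1 := by positivity
      rw [div_lt_div_iff₀ hkpos hkpos]
      nlinarith
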